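/- Let q be an odd prime power, V a 2n-dimensional vector space over 𝔽_q equipped with a nondegenerate symmetric bilinear form that admits a Lagrangian subspace, and L ⊆ V a fixed Lagrangian. Then the number of Lagrangian subspaces I of V with I ∩ L = 0 equals q^{n(n−1)/2}. -/

import Mathlib

open Matrix Module


lemma stmt9_card_pairs (n : ℕ) :
    Fintype.card {p : Fin n × Fin n // p.1 < p.2} = n * (n - 1) / 2 := by
  have e : {p : Fin n × Fin n // p.1 < p.2} ≃ Σ j : Fin n, Fin j.1 :=
    { toFun := fun p => ⟨p.1.2, ⟨p.1.1, p.2⟩⟩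
      invFun := fun x => ⟨(⟨x.2.1, x.2.2.trans x.1.2⟩, x.1), x.2.2⟩
      left_inv := fun p => by ext <;> rfl
      right_inv := fun x => by rfl }
  rw [Fintype.card_congr e, Fintype.card_sigma]
  simp only [Fintype.card_fin]
  rw [Fin.sum_univ_eq_sum_range (fun i => i) n, Finset.sum_range_id]

lemma stmt9_matrix_card {F : Type*} [Field F] [Fintype F] (h2 : (2 : F) ≠ 0)
    (n : ℕ) (S : Matrix (Fin n) (Fin n) F) (hS : Sᵀ = S) :
    Nat.card {M : Matrix (Fin n) (Fin n) F // M + Mᵀ = S}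
      = Fintype.card F ^ (n * (n - 1) / 2) := by
  classical
  have hSs : ∀ i j, S j i = S i j := fun i j => by
    simpa using (congrFun (congrFun hS j) i).symm
  let inv : ({p : Fin n × Fin n // p.1 < p.2} → F) → Matrix (Fin n) (Fin n) F :=
    fun g => Matrix.of fun i j =>
      if h : i < j then g ⟨(i, j), h⟩
      else if h' : j < i then S i j - g ⟨(j, i), h'⟩
      else S i i / 2
  have hinv : ∀ g, inv g + (inv g)ᵀ = S := by
    intro g
    ext i j
    simp only [Matrix.add_apply, Matrix.transpose_apply, inv, Matrix.of_apply]
    rcases lt_trichotomy i j with h | h | h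
    · rw [dif_pos h, dif_neg (asymm h), dif_pos h]
      rw [hSs i j]; ring
    · subst h
      rw [dif_neg (lt_irrefl i), dif_neg (lt_irrefl i)]
      rw [← add_div, ← two_mul, mul_div_cancel_left₀ _ h2]
    · rw [dif_neg (asymm h), dif_pos h, dif_pos h]
      ring
  have e : {M : Matrix (Fin n) (Fin n) F // M + Mᵀ = S}
      ≃ ({p : Fin n × Fin n // p.1 < p.2} → F) :=
    { toFun := fun M p => M.1 p.1.1 p.1.2
      invFun := fun g => ⟨inv g, hinv g⟩
      left_inv := by
        rintro ⟨M, hM⟩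
        ext i j
        have hM' : ∀ i j, M i j + M j i = S i j := fun i j => by
          have := congrFun (congrFun hM i) j
          simpa [Matrix.add_apply] using this
        simp only [inv, Matrix.of_apply]
        rcases lt_trichotomy i j with h | h | h
        · rw [dif_pos h]
        · subst h
          rw [dif_neg (lt_irrefl i), dif_neg (lt_irrefl i)]
          rw [div_eq_iff h2, ← hM' i i]; ring
        · rw [dif_neg (asymm h), dif_pos h, ← hM' i j]; ring
      right_inv := by
        intro g
        funext p
        simp only [inv, Matrix.of_apply]
        rw [dif_pos p.2] }
  rw [Nat.card_congr e, Nat.card_fun, Nat.card_eq_fintype_card, Nat.card_eq_fintype_card,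
    stmt9_card_pairs]

/-- Let `F = 𝔽_q` be a finite field of odd order, `V` a `2n`-dimensional `F`-vector
space with a nondegenerate symmetric bilinear form `B` admitting a Lagrangian, and
`L ⊆ V` a fixed Lagrangian (`L = L^⊥`, expressed pointwise).  Then the number of
Lagrangians `I` with `I ∩ L = 0` equals `q^{n(n−1)/2}`. -/
theorem stmt9 {F V : Type*} [Field F] [Fintype F] (hodd : Odd (Fintype.card F))
    [AddCommGroup V] [Module F V]
    [FiniteDimensional F V] (n : ℕ) (hdim : Module.finrank F V = 2 * n)
    (B : V →ₗ[F] V →ₗ[F] F)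
    (hsym : ∀ v w, B v w = B w v)
    (hnd : ∀ v, (∀ w, B v w = 0) → v = 0)
    (L : Submodule F V) (hL : ∀ v, v ∈ L ↔ ∀ w ∈ L, B v w = 0) :
    Nat.card {I : Submodule F V // (∀ v, v ∈ I ↔ ∀ w ∈ I, B v w = 0) ∧ I ⊓ L = ⊥}
      = Fintype.card F ^ (n * (n - 1) / 2) := by
  classical
  have h2 : (2 : F) ≠ 0 := by
    intro h
    have hd : ringChar F ∣ 2 := by
      rw [← CharP.cast_eq_zero_iff F (ringChar F) 2]
      exact_mod_cast h
    have hp : Nat.Prime (ringChar F) := CharP.char_is_prime F _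
    have hc2 : ringChar F = 2 := (Nat.prime_dvd_prime_iff_eq hp Nat.prime_two).mp hd
    have he := FiniteField.even_card_of_char_two hc2
    rw [Nat.odd_iff] at hodd
    omega
  have hrefl : LinearMap.IsRefl B := fun v w h => by rw [hsym]; exact h
  have hndB : LinearMap.BilinForm.Nondegenerate B :=
    ⟨hnd, fun w h => hnd w (fun v => by rw [hsym]; exact h v)⟩
  -- any "Lagrangian" has rank n
  have key : ∀ W : Submodule F V, (∀ v, v ∈ W ↔ ∀ w ∈ W, B v w = 0) →
      Module.finrank F W = n := by
    intro W hW
    have hWo : W = LinearMap.BilinForm.orthogonal B W := by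
      ext v
      rw [hW v, LinearMap.BilinForm.mem_orthogonal_iff]
      constructor
      · intro h w hw; exact hrefl _ _ (h w hw)
      · intro h w hw; exact hrefl _ _ (h w hw)
    have h := LinearMap.BilinForm.finrank_add_finrank_orthogonal hrefl W
    rw [LinearMap.BilinForm.orthogonal_top_eq_bot hndB, inf_bot_eq, finrank_bot, add_zero,
      ← hWo, hdim] at h
    omega
  have hrankL : Module.finrank F L = n := key L hL
  have hLiso : ∀ x ∈ L, ∀ y ∈ L, B x y = 0 := fun x hx y hy => (hL x).mp hx y hy
  obtain ⟨C, hC⟩ := Submodule.exists_isCompl L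
  have hrankC : Module.finrank F C = n := by
    have h := Submodule.finrank_add_eq_of_isCompl hC
    rw [hdim, hrankL] at h
    omega
  -- the graph construction
  set Φ : (C →ₗ[F] L) → Submodule F V :=
    fun f => LinearMap.range (C.subtype + L.subtype ∘ₗ f) with hΦ
  have hmem : ∀ (f : C →ₗ[F] L) (v : V),
      v ∈ Φ f ↔ ∃ c : C, (c : V) + (f c : V) = v := by
    intro f v
    simp [hΦ, LinearMap.mem_range, LinearMap.add_apply]
  have hdisjL : ∀ x : V, x ∈ L → x ∈ C → x = 0 :=
    fun x hxL hxC => Submodule.disjoint_def.mp hC.disjoint x hxL hxC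
  have hdisj : ∀ f, Φ f ⊓ L = ⊥ := by
    intro f
    rw [eq_bot_iff]
    rintro v hv
    obtain ⟨hvΦ, hvL⟩ := Submodule.mem_inf.mp hv
    obtain ⟨c, hc⟩ := (hmem f v).mp hvΦ
    have hcL : (c : V) ∈ L := by
      have hcv : (c : V) = v - (f c : V) := by rw [← hc]; abel
      rw [hcv]; exact Submodule.sub_mem L hvL (f c).2
    have hc0 : (c : V) = 0 := hdisjL _ hcL c.2
    have : c = 0 := Subtype.ext hc0
    rw [Submodule.mem_bot, ← hc, this]
    simp
  have hinj_graph : ∀ f : C →ₗ[F] L, Function.Injective (C.subtype + L.subtype ∘ₗ f) := by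
    intro f x y hxy
    simp only [LinearMap.add_apply, LinearMap.coe_comp, Function.comp_apply,
      Submodule.coe_subtype] at hxy
    have h1 : ((x - y : C) : V) = ((f y - f x : L) : V) := by
      push_cast
      rw [sub_eq_sub_iff_add_eq_add, hxy]
      abel
    have h0 : ((x - y : C) : V) = 0 := by
      apply hdisjL
      · rw [h1]; exact (f y - f x).2
      · exact (x - y).2
    have : x - y = 0 := Subtype.ext h0
    rwa [sub_eq_zero] at this
  have hrank_graph : ∀ f, Module.finrank F (Φ f) = n := by
    intro f
    rw [hΦ]
    rw [LinearMap.finrank_range_of_inj (hinj_graph f), hrankC]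
  -- expansion of the form on graph elements
  have hexp : ∀ (f : C →ₗ[F] L) (c c' : C),
      B ((c : V) + (f c : V)) ((c' : V) + (f c' : V))
        = B c c' + B c (f c') + B c' (f c) := by
    intro f c c'
    simp only [map_add, LinearMap.add_apply]
    rw [hLiso _ (f c).2 _ (f c').2, hsym ((f c) : V) (c' : V)]
    ring
  -- graph is Lagrangian iff isotropy condition
  have hgraph_lagr : ∀ f : C →ₗ[F] L,
      (∀ c c' : C, B ((c : V) + (f c : V)) ((c' : V) + (f c' : V)) = 0) ↔
      (∀ v, v ∈ Φ f ↔ ∀ w ∈ Φ f, B v w = 0) := by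
    intro f
    constructor
    · intro hf v
      constructor
      · intro hv w hw
        obtain ⟨c, hc⟩ := (hmem f v).mp hv
        obtain ⟨c', hc'⟩ := (hmem f w).mp hw
        rw [← hc, ← hc']
        exact hf c c'
      · intro hv
        have hle : Φ f ≤ LinearMap.BilinForm.orthogonal B (Φ f) := by
          intro x hx
          rw [LinearMap.BilinForm.mem_orthogonal_iff]
          intro w hw
          obtain ⟨c, hc⟩ := (hmem f w).mp hw
          obtain ⟨c', hc'⟩ := (hmem f x).mp hx
          rw [← hc, ← hc']
          exact hf c c'
        have heq : Φ f = LinearMap.BilinForm.orthogonal B (Φ f) := by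
          apply Submodule.eq_of_le_of_finrank_le hle
          rw [LinearMap.BilinForm.finrank_orthogonal hndB, hdim, hrank_graph f]
          omega
        rw [heq, LinearMap.BilinForm.mem_orthogonal_iff]
        intro w hw
        exact hrefl _ _ (hv w hw)
    · intro hla c c'
      exact ((hla _).mp ((hmem f _).mpr ⟨c, rfl⟩)) _ ((hmem f _).mpr ⟨c', rfl⟩)
  -- the map to the set of Lagrangians transverse to L
  let g : {f : C →ₗ[F] L // ∀ c c' : C,
        B ((c : V) + (f c : V)) ((c' : V) + (f c' : V)) = 0}
      → {I : Submodule F V // (∀ v, v ∈ I ↔ ∀ w ∈ I, B v w = 0) ∧ I ⊓ L = ⊥} :=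
    fun f => ⟨Φ f.1, ⟨(hgraph_lagr f.1).mp f.2, hdisj f.1⟩⟩
  have hginj : Function.Injective g := by
    rintro ⟨f, hf⟩ ⟨f', hf'⟩ hff
    have hΦeq : Φ f = Φ f' := congrArg Subtype.val hff
    apply Subtype.ext
    apply LinearMap.ext
    intro c
    have h1 : (c : V) + (f c : V) ∈ Φ f' := by
      rw [← hΦeq]; exact (hmem f _).mpr ⟨c, rfl⟩
    obtain ⟨c', hc'⟩ := (hmem f' _).mp h1
    have hcc : ((c - c' : C) : V) = ((f' c' - f c : L) : V) := by
      push_cast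
      rw [sub_eq_sub_iff_add_eq_add, ← hc']
      abel
    have h0 : ((c - c' : C) : V) = 0 := by
      apply hdisjL
      · rw [hcc]; exact (f' c' - f c).2
      · exact (c - c').2
    have hcc' : c = c' := by
      have : c - c' = 0 := Subtype.ext h0
      rwa [sub_eq_zero] at this
    apply Subtype.ext
    have h10 : (c : V) + (f c : V) = (c : V) + (f' c : V) := by
      rw [← hc', hcc']
    show ((f c : L) : V) = ((f' c : L) : V)
    exact add_left_cancel h10
  have hgsurj : Function.Surjective g := by
    rintro ⟨I, hI1, hI2⟩
    have hrkI : Module.finrank F I = n := key I hI1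
    have hIL : IsCompl I L := by
      constructor
      · exact disjoint_iff.mpr hI2
      · rw [codisjoint_iff]
        apply Submodule.eq_top_of_finrank_eq
        have h3 := Submodule.finrank_sup_add_finrank_inf_eq I L
        rw [hI2, finrank_bot, add_zero, hrkI, hrankL] at h3
        rw [hdim]
        omega
    set πL : V →ₗ[F] L := L.projectionOnto I hIL.symm with hπL
    set πI : V →ₗ[F] I := I.projectionOnto L hIL with hπI
    set πC : V →ₗ[F] C := C.projectionOnto L hC.symm with hπC
    set πL' : V →ₗ[F] L := L.projectionOnto C hC with hπL'
    set f : C →ₗ[F] L := -(πL ∘ₗ C.subtype) with hf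
    have hfc : ∀ c : C, (c : V) + (f c : V) = (πI (c : V) : V) := by
      intro c
      have h4 := Submodule.projection_add_projection_eq_self hIL (c : V)
      change (πI (c : V) : V) + (πL (c : V) : V) = (c : V) at h4
      rw [eq_sub_of_add_eq h4]
      simp only [hf, LinearMap.neg_apply, LinearMap.coe_comp, Function.comp_apply,
        Submodule.coe_subtype, Submodule.coe_neg]
      abel
    have hΦI : Φ f = I := by
      apply le_antisymm
      · intro v hv
        obtain ⟨c, hc⟩ := (hmem f v).mp hv
        rw [← hc, hfc c]
        exact (πI (c : V)).2
      · intro v hv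
        rw [hmem f v]
        refine ⟨πC v, ?_⟩
        rw [hfc (πC v)]
        have h5 := Submodule.projection_add_projection_eq_self hC v
        change (πL' v : V) + (πC v : V) = v at h5
        have h6 : (πC v : V) = v - (πL' v : V) := eq_sub_of_add_eq' h5
        have h7 : πI (πC v : V) = πI v - πI (πL' v : V) := by
          rw [h6, map_sub]
        have h8 : πI v = ⟨v, hv⟩ := by
          rw [hπI]
          exact Submodule.projectionOnto_apply_left hIL ⟨v, hv⟩
        have h9 : πI (πL' v : V) = 0 := by
          rw [hπI]
          exact Submodule.projectionOnto_apply_of_mem_right hIL (πL' v).2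
        rw [h7, h8, h9, sub_zero]
    refine ⟨⟨f, ?_⟩, ?_⟩
    · apply (hgraph_lagr f).mpr
      rw [hΦI]
      exact hI1
    · apply Subtype.ext
      exact hΦI
  have e1 : {f : C →ₗ[F] L // ∀ c c' : C,
        B ((c : V) + (f c : V)) ((c' : V) + (f c' : V)) = 0}
      ≃ {I : Submodule F V // (∀ v, v ∈ I ↔ ∀ w ∈ I, B v w = 0) ∧ I ⊓ L = ⊥} :=
    Equiv.ofBijective g ⟨hginj, hgsurj⟩
  -- from linear maps to bilinear forms
  set P : C →ₗ[F] L →ₗ[F] F := B.compl₁₂ C.subtype L.subtype with hP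
  set Ψ : (C →ₗ[F] L) →ₗ[F] (C →ₗ[F] C →ₗ[F] F) :=
    { toFun := fun f => P.compl₂ f
      map_add' := fun f g' => by ext c c'; simp
      map_smul' := fun a f => by ext c c'; simp } with hΨ
  have hΨapp : ∀ (f : C →ₗ[F] L) (c c' : C), Ψ f c c' = B (c : V) ((f c' : L) : V) := by
    intro f c c'
    simp [hΨ, hP, LinearMap.compl₂_apply, LinearMap.compl₁₂_apply]
  have hΨinj : Function.Injective Ψ := by
    suffices hker : ∀ f, Ψ f = 0 → f = 0 by
      intro f f' hff
      refine sub_eq_zero.mp (hker _ ?_)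
      ext c c'
      rw [hΨapp, LinearMap.sub_apply, Submodule.coe_sub, map_sub, ← hΨapp, ← hΨapp, hff, sub_self,
        LinearMap.zero_apply, LinearMap.zero_apply]
    intro f hfker
    apply LinearMap.ext
    intro c'
    apply Subtype.ext
    apply hnd
    intro w
    have hw : w ∈ L ⊔ C := by rw [hC.sup_eq_top]; exact Submodule.mem_top
    obtain ⟨l, hl, c, hcC, rfl⟩ := Submodule.mem_sup.mp hw
    rw [map_add]
    have hzero : Ψ f = 0 := hfker
    have hBc : B (c : V) ((f c' : L) : V) = 0 := by
      have := hΨapp f ⟨c, hcC⟩ c'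
      rw [hzero] at this
      simpa using this.symm
    rw [hLiso _ (f c').2 l hl, hsym _ c, hBc]
    simp
  have hΨsurj : Function.Surjective Ψ := by
    have := Module.finite_of_finite F (M := C →ₗ[F] L)
    refine (fun H => (Finite.injective_iff_surjective_of_equiv (LinearEquiv.ofFinrankEq _ _ H).toEquiv).mp hΨinj :
      finrank F (C →ₗ[F] L) = finrank F (C →ₗ[F] C →ₗ[F] F) → Function.Surjective Ψ) ?_
    rw [Module.finrank_linearMap, Module.finrank_linearMap, Module.finrank_linearMap,
      hrankC, hrankL, Module.finrank_self]
    ring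
  set eΨ : (C →ₗ[F] L) ≃ₗ[F] (C →ₗ[F] C →ₗ[F] F) :=
    LinearEquiv.ofBijective Ψ ⟨hΨinj, hΨsurj⟩ with heΨ
  set γ : C →ₗ[F] C →ₗ[F] F := -(B.compl₁₂ C.subtype C.subtype) with hγ
  have hγapp : ∀ c c' : C, γ c c' = -(B (c : V) (c' : V)) := by
    intro c c'
    simp [hγ, LinearMap.compl₁₂_apply]
  have hcond : ∀ f : C →ₗ[F] L,
      (∀ c c' : C, B ((c : V) + (f c : V)) ((c' : V) + (f c' : V)) = 0)
      ↔ Ψ f + (Ψ f).flip = γ := by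
    intro f
    constructor
    · intro h
      apply LinearMap.ext; intro c; apply LinearMap.ext; intro c'
      have h1 := h c c'
      rw [hexp] at h1
      simp only [LinearMap.add_apply, LinearMap.flip_apply, hΨapp, hγapp]
      linear_combination h1
    · intro h c c'
      rw [hexp]
      have h1 : (Ψ f + (Ψ f).flip) c c' = γ c c' := by rw [h]
      simp only [LinearMap.add_apply, LinearMap.flip_apply, hΨapp, hγapp] at h1
      linear_combination h1
  have e2 : {f : C →ₗ[F] L // ∀ c c' : C,
        B ((c : V) + (f c : V)) ((c' : V) + (f c' : V)) = 0}
      ≃ {β : C →ₗ[F] C →ₗ[F] F // β + β.flip = γ} := by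
    apply (eΨ.toEquiv).subtypeEquiv
    intro f
    have hts : eΨ.toEquiv f = Ψ f := rfl
    rw [hcond f, hts]
  -- to matrices
  have bC : Basis (Fin n) F C := Module.finBasisOfFinrankEq F C hrankC
  set eM : (↥C →ₗ[F] ↥C →ₗ[F] F) ≃ₗ[F] Matrix (Fin n) (Fin n) F := LinearMap.toMatrix₂ bC bC with heM
  set S : Matrix (Fin n) (Fin n) F := eM γ with hSdef
  have hflipM : ∀ β : C →ₗ[F] C →ₗ[F] F, eM β.flip = (eM β)ᵀ := by
    intro β
    ext i j
    simp [heM, LinearMap.toMatrix₂_apply, Matrix.transpose_apply, LinearMap.flip_apply]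
  have hS : Sᵀ = S := by
    ext i j
    simp only [hSdef, heM, Matrix.transpose_apply, LinearMap.toMatrix₂_apply, hγapp]
    rw [hsym]
  have e3 : {β : C →ₗ[F] C →ₗ[F] F // β + β.flip = γ}
      ≃ {M : Matrix (Fin n) (Fin n) F // M + Mᵀ = S} := by
    apply (eM.toEquiv).subtypeEquiv
    intro β
    have hts : eM.toEquiv β = eM β := rfl
    rw [hts]
    constructor
    · intro h
      rw [← hflipM, ← map_add, h]
    · intro h
      apply eM.injective
      rw [map_add, hflipM, h]
  rw [Nat.card_congr (((e1.symm.trans e2).trans e3))]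
  exact stmt9_matrix_card h2 n S hS
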